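/- For p = 3, the characteristic polynomials P_n of the adjacency matrices A_n of the finite Schreier graphs of the star automaton group 𝒢_{S_3} satisfy: P_1(λ) = (λ − 6)(λ + 2)(λ − 4)², and for every n ≥ 1, P_{n+1}(λ) = (λ − 4)^{2·4^n} · P_n(λ² − 4λ − 6); that is, in ℝ[X], P_{n+1} = (X − 4)^{2·4^n} · (P_n composed with X² − 4X − 6). -/

import Mathlib

open Polynomial Matrix

/-- The action of the generator `e_i` of the star automaton group `𝒢_{S_p}` on
words of length `n` over the alphabet `X = {0, 1, …, p}`. -/
def starWord (p : ℕ) (i : Fin (p + 1)) : (n : ℕ) → (Fin n → Fin (p + 1)) → Fin n → Fin (p + 1)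
  | 0, w => w
  | n + 1, w =>
    if w 0 = 0 then Fin.cons i (starWord p i n (Fin.tail w))
    else if w 0 = i then Fin.cons 0 (Fin.tail w)
    else w

/-- The real permutation matrix of `e_i^{(n)}`. -/
noncomputable def starMat (p n : ℕ) (i : Fin (p + 1)) :
    Matrix (Fin n → Fin (p + 1)) (Fin n → Fin (p + 1)) ℝ :=
  fun u v => if starWord p i n u = v then 1 else 0

/-- The adjacency matrix `A_n = Σ_{i=1}^p (M_{i,n} + M_{i,n}ᵀ)` of the `n`-th
Schreier graph of the star automaton group `𝒢_{S_p}`. -/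
noncomputable def starAdj (p n : ℕ) :
    Matrix (Fin n → Fin (p + 1)) (Fin n → Fin (p + 1)) ℝ :=
  ∑ i : Fin p, (starMat p n i.succ + (starMat p n i.succ)ᵀ)

/-! ### Auxiliary material -/

abbrev Wrd (n : ℕ) := Fin n → Fin 4

lemma sw_cons (n : ℕ) (i x : Fin 4) (w : Wrd n) :
    starWord 3 i (n+1) (Fin.cons x w) =
      if x = 0 then Fin.cons i (starWord 3 i n w)
      else if x = i then Fin.cons 0 w else Fin.cons x w := by
  simp [starWord, Fin.cons_zero, Fin.tail_cons]

lemma sw_inj (n : ℕ) (i : Fin 4) : Function.Injective (starWord 3 i n) := by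
  induction n with
  | zero => intro u v _; funext j; exact absurd j.2 (by simp)
  | succ n ih =>
    intro u v h
    rw [← Fin.cons_self_tail u, ← Fin.cons_self_tail v] at h ⊢
    rw [sw_cons, sw_cons] at h
    split_ifs at h with h1 h2 h3 h4 h5 h6 h7 h8 <;>
      rw [Fin.cons_inj] at h ⊢ <;>
      first
        | exact ⟨by simp_all, h.2⟩
        | exact ⟨by simp_all, ih h.2⟩
        | simp_all

lemma mat_mul_transpose (n : ℕ) (i : Fin 4) : starMat 3 n i * (starMat 3 n i)ᵀ = 1 := by
  ext u v
  simp only [mul_apply, starMat, transpose_apply, ite_mul, one_mul, zero_mul, mul_ite, mul_one,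
    mul_zero]
  rw [Finset.sum_ite_eq Finset.univ (starWord 3 i n v)]
  simp [Matrix.one_apply, (sw_inj n i).eq_iff, eq_comm]

lemma starAdj_apply (p n : ℕ) (u v : Fin n → Fin (p+1)) :
    starAdj p n u v = ∑ i : Fin p,
      ((if starWord p i.succ n u = v then (1:ℝ) else 0) +
       (if starWord p i.succ n v = u then 1 else 0)) := by
  simp [starAdj, starMat, Matrix.sum_apply]

lemma starAdj_symm (p n : ℕ) (u v : Fin n → Fin (p+1)) :
    starAdj p n u v = starAdj p n v u := by
  rw [starAdj_apply, starAdj_apply]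
  exact Finset.sum_congr rfl fun i _ => add_comm _ _

noncomputable def Bmat (n : ℕ) : Matrix (Wrd n) (Fin 3 × Wrd n) ℝ :=
  Matrix.of fun u iv => (starMat 3 n iv.1.succ + 1) u iv.2

lemma BBt (n : ℕ) : Bmat n * (Bmat n)ᵀ = (6:ℝ) • 1 + starAdj 3 n := by
  have key : ∀ i : Fin 4,
      (starMat 3 n i + 1) * (starMat 3 n i + 1)ᵀ
        = (2:ℝ) • 1 + (starMat 3 n i + (starMat 3 n i)ᵀ) := by
    intro i
    rw [transpose_add, transpose_one, add_mul, mul_add, mul_add, mat_mul_transpose,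
      mul_one, one_mul, one_mul]
    module
  ext u v
  rw [mul_apply, Fintype.sum_prod_type]
  have : ∀ i : Fin 3, ∑ w : Wrd n, Bmat n u (i, w) * (Bmat n)ᵀ (i, w) v
      = ((2:ℝ) • 1 + (starMat 3 n i.succ + (starMat 3 n i.succ)ᵀ)) u v := by
    intro i
    rw [← key i.succ, mul_apply]
    rfl
  rw [Finset.sum_congr rfl fun i _ => this i]
  simp [starAdj, Matrix.sum_apply, Finset.sum_add_distrib]
  ring

def splitEquiv (n : ℕ) : (Wrd n ⊕ Fin 3 × Wrd n) ≃ Wrd (n+1) where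
  toFun := fun a => match a with
    | .inl w => Fin.cons 0 w
    | .inr (i, w) => Fin.cons i.succ w
  invFun := fun u => if h : u 0 = 0 then .inl (Fin.tail u)
    else .inr ((u 0).pred h, Fin.tail u)
  left_inv := by
    rintro (w | ⟨i, w⟩) <;> simp [Fin.succ_ne_zero]
  right_inv := by
    intro u
    by_cases h : u 0 = 0
    · simp only [h, dif_pos]
      rw [← h, Fin.cons_self_tail]
    · simp only [h, dif_neg, not_false_iff]
      rw [Fin.succ_pred, Fin.cons_self_tail]

lemma adj_mixed (n : ℕ) (u v : Wrd n) (j : Fin 3) :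
    starAdj 3 (n+1) (Fin.cons 0 u) (Fin.cons j.succ v) = Bmat n u (j, v) := by
  rw [starAdj_apply]
  have key : ∀ i : Fin 3,
      ((if starWord 3 i.succ (n+1) (Fin.cons 0 u) = Fin.cons j.succ v then (1:ℝ) else 0) +
       (if starWord 3 i.succ (n+1) (Fin.cons j.succ v) = Fin.cons 0 u then 1 else 0))
      = if i = j then
          ((if starWord 3 j.succ n u = v then (1:ℝ) else 0) + (if v = u then 1 else 0))
        else 0 := by
    intro i
    by_cases hij : i = j
    · subst hij
      simp [sw_cons, Fin.cons_inj, Fin.succ_ne_zero, (Fin.succ_ne_zero i).symm]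
    · have : i.succ ≠ j.succ := fun h => hij (Fin.succ_injective _ h)
      simp [sw_cons, Fin.cons_inj, Fin.succ_ne_zero, hij, Ne.symm hij, this,
        (Fin.succ_ne_zero j)]
  rw [Finset.sum_congr rfl fun i _ => key i, Finset.sum_ite_eq' Finset.univ j]
  simp [Bmat, starMat, Matrix.one_apply, Matrix.add_apply, eq_comm]

lemma adj_diag (n : ℕ) (u v : Wrd n) (i j : Fin 3) :
    starAdj 3 (n+1) (Fin.cons i.succ u) (Fin.cons j.succ v)
      = ((4:ℝ) • (1 : Matrix (Fin 3 × Wrd n) (Fin 3 × Wrd n) ℝ)) (i, u) (j, v) := by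
  rw [starAdj_apply]
  have key : ∀ k : Fin 3,
      ((if starWord 3 k.succ (n+1) (Fin.cons i.succ u) = Fin.cons j.succ v then (1:ℝ) else 0) +
       (if starWord 3 k.succ (n+1) (Fin.cons j.succ v) = Fin.cons i.succ u then 1 else 0))
      = (if k = i then 0 else if i = j ∧ u = v then (1:ℝ) else 0)
        + (if k = j then 0 else if i = j ∧ u = v then (1:ℝ) else 0) := by
    intro k
    congr 1
    · by_cases hk : k = i
      · subst hk
        simp [sw_cons, Fin.cons_inj, Fin.succ_ne_zero, (Fin.succ_ne_zero j).symm]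
      · have : i.succ ≠ k.succ := fun h => hk (Fin.succ_injective _ h).symm
        simp [sw_cons, Fin.cons_inj, Fin.succ_ne_zero, this, Fin.succ_inj, hk]
    · by_cases hk : k = j
      · subst hk
        simp [sw_cons, Fin.cons_inj, Fin.succ_ne_zero, (Fin.succ_ne_zero i).symm]
      · have : j.succ ≠ k.succ := fun h => hk (Fin.succ_injective _ h).symm
        simp [sw_cons, Fin.cons_inj, Fin.succ_ne_zero, this, Fin.succ_inj, hk,
          and_comm, eq_comm]
  rw [Finset.sum_congr rfl fun k _ => key k, Finset.sum_add_distrib]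
  have sum2 : ∀ (a : Fin 3) (c : ℝ), (∑ k : Fin 3, if k = a then 0 else c) = 2 * c := by
    intro a c
    fin_cases a <;> simp [Fin.sum_univ_three] <;> ring
  rw [sum2, sum2]
  by_cases h : i = j ∧ u = v
  · obtain ⟨h1, h2⟩ := h
    subst h1; subst h2
    simp [Matrix.smul_apply, Matrix.one_apply]
    norm_num
  · have : ¬ ((i, u) = (j, v)) := by simpa [Prod.ext_iff] using h
    simp [Matrix.smul_apply, Matrix.one_apply, h, this]

lemma submatrix_eq (n : ℕ) :
    (starAdj 3 (n+1)).submatrix (splitEquiv n) (splitEquiv n) =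
      fromBlocks 0 (Bmat n) (Bmat n)ᵀ ((4:ℝ) • 1) := by
  ext a b
  rcases a with u | ⟨i, u⟩ <;> rcases b with v | ⟨j, v⟩
  · show starAdj 3 (n+1) (Fin.cons 0 u) (Fin.cons 0 v) = 0
    rw [starAdj_apply]
    simp [sw_cons, Fin.cons_inj, Fin.succ_ne_zero]
  · exact adj_mixed n u v j
  · show starAdj 3 (n+1) (Fin.cons i.succ u) (Fin.cons 0 v) = (Bmat n)ᵀ (i, u) v
    rw [starAdj_symm]
    exact adj_mixed n v u i
  · exact adj_diag n u v i j

lemma card_W (n : ℕ) : Fintype.card (Wrd n) = 4 ^ n := by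
  simp [Fintype.card_fun]

lemma charmatrix_zero (n : ℕ) :
    charmatrix (0 : Matrix (Wrd n) (Wrd n) ℝ) = (X : ℝ[X]) • 1 := by
  ext u v
  by_cases h : u = v
  · subst h; simp [charmatrix_apply_eq, Matrix.smul_apply, Matrix.one_apply]
  · simp [charmatrix_apply_ne _ _ _ h, Matrix.smul_apply, Matrix.one_apply, h]

lemma charmatrix_smul_one {m : Type*} [Fintype m] [DecidableEq m] (r : ℝ) :
    charmatrix (r • (1 : Matrix m m ℝ)) = (X - C r : ℝ[X]) • 1 := by
  ext u v
  by_cases h : u = v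
  · subst h
    simp [charmatrix_apply_eq, Matrix.smul_apply, Matrix.one_apply]
  · simp [charmatrix_apply_ne _ _ _ h, Matrix.smul_apply, Matrix.one_apply, h]

lemma map_six_add (n : ℕ) (A : Matrix (Wrd n) (Wrd n) ℝ) :
    ((6:ℝ) • 1 + A).map C = (C 6 : ℝ[X]) • 1 + A.map C := by
  ext u v
  by_cases h : u = v <;>
    simp [Matrix.map_apply, Matrix.add_apply, Matrix.smul_apply, Matrix.one_apply, h]

lemma charmatrix_map_aeval (n : ℕ) (A : Matrix (Wrd n) (Wrd n) ℝ) (q : ℝ[X]) :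
    (charmatrix A).map (aeval q : ℝ[X] →ₐ[ℝ] ℝ[X]) = q • 1 - A.map C := by
  ext u v
  by_cases h : u = v
  · subst h
    simp [charmatrix_apply_eq, Matrix.map_apply, Matrix.smul_apply, Matrix.one_apply,
      Matrix.sub_apply, Polynomial.algebraMap_eq]
  · simp [charmatrix_apply_ne _ _ _ h, Matrix.map_apply, Matrix.smul_apply, Matrix.one_apply,
      Matrix.sub_apply, h, Polynomial.algebraMap_eq]

lemma charpoly_block (n : ℕ) :
    (fromBlocks 0 (Bmat n) (Bmat n)ᵀ ((4:ℝ) • 1)).charpoly =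
      (X - C 4) ^ (2 * 4 ^ n) * ((starAdj 3 n).charpoly.comp (X ^ 2 - C 4 * X - C 6)) := by
  set q : ℝ[X] := X ^ 2 - C 4 * X - C 6 with hq
  set d : ℝ[X] := X - C 4 with hd
  set Bc : Matrix (Wrd n) (Fin 3 × Wrd n) ℝ[X] := (Bmat n).map C with hBc
  set Ac : Matrix (Wrd n) (Wrd n) ℝ[X] := (starAdj 3 n).map C with hAc
  have hM' : charmatrix (fromBlocks 0 (Bmat n) (Bmat n)ᵀ ((4:ℝ) • 1))
      = fromBlocks ((X : ℝ[X]) • 1) (-Bc) (-Bcᵀ) (d • 1) := by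
    rw [charmatrix_fromBlocks, charmatrix_zero, charmatrix_smul_one, Matrix.transpose_map]
  set N : Matrix (Wrd n ⊕ Fin 3 × Wrd n) (Wrd n ⊕ Fin 3 × Wrd n) ℝ[X] :=
    fromBlocks (d • 1) 0 Bcᵀ 1 with hN
  have hprod : fromBlocks ((X : ℝ[X]) • 1) (-Bc) (-Bcᵀ) (d • 1) * N
      = fromBlocks ((d * X) • 1 - Bc * Bcᵀ) (-Bc) 0 (d • 1) := by
    rw [hN, fromBlocks_multiply]
    simp only [Matrix.mul_smul, Matrix.smul_mul, Matrix.mul_one, Matrix.one_mul, Matrix.mul_zero,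
      Matrix.zero_mul, Matrix.neg_mul, smul_smul, add_zero, zero_add, zero_sub, smul_neg,
      neg_add_cancel, ← sub_eq_add_neg]
  have hdetN : N.det = d ^ (4 ^ n) := by
    rw [hN, det_fromBlocks_zero₁₂, det_one, mul_one, Matrix.smul_one_eq_diagonal]
    rw [det_diagonal]
    simp [card_W, Finset.prod_const]
  have hcardP : Fintype.card (Fin 3 × Wrd n) = 3 * 4 ^ n := by
    simp [Fintype.card_fun]
  have hdetD : ((d • 1 : Matrix (Fin 3 × Wrd n) (Fin 3 × Wrd n) ℝ[X])).det = d ^ (3 * 4 ^ n) := by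
    rw [Matrix.det_smul, det_one, mul_one, hcardP]
  have hT : (d * X) • (1 : Matrix (Wrd n) (Wrd n) ℝ[X]) - Bc * Bcᵀ = q • 1 - Ac := by
    rw [hBc, ← Matrix.transpose_map, ← Matrix.map_mul, BBt, map_six_add]
    have : (d * X) • (1 : Matrix (Wrd n) (Wrd n) ℝ[X]) - ((C 6 : ℝ[X]) • 1 + Ac)
        = (d * X - C 6) • 1 - Ac := by
      rw [sub_smul, sub_sub, add_comm ((C 6 : ℝ[X]) • 1)]
    rw [this]
    congr 2
    rw [hq, hd]; ring
  have hcomp : ((starAdj 3 n).charpoly.comp q) = (q • 1 - Ac).det := by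
    rw [comp_eq_aeval, Matrix.charpoly]
    have := RingHom.map_det ((aeval q : ℝ[X] →ₐ[ℝ] ℝ[X]) : ℝ[X] →+* ℝ[X])
      (charmatrix (starAdj 3 n))
    rw [show ((aeval q : ℝ[X] →ₐ[ℝ] ℝ[X]) : ℝ[X] →+* ℝ[X]) (charmatrix (starAdj 3 n)).det
        = aeval q (charmatrix (starAdj 3 n)).det from rfl] at this
    rw [this]
    congr 1
    exact charmatrix_map_aeval n (starAdj 3 n) q
  have key : (fromBlocks 0 (Bmat n) (Bmat n)ᵀ ((4:ℝ) • 1)).charpoly * d ^ (4 ^ n)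
      = ((starAdj 3 n).charpoly.comp q) * d ^ (3 * 4 ^ n) := by
    rw [Matrix.charpoly, hM', ← hdetN, ← det_mul, hprod, det_fromBlocks_zero₂₁, hT, hcomp, hdetD]
  have hd0 : d ^ (4 ^ n) ≠ 0 := pow_ne_zero _ (Polynomial.X_sub_C_ne_zero 4)
  have h3 : d ^ (3 * 4 ^ n) = d ^ (2 * 4 ^ n) * d ^ (4 ^ n) := by
    rw [← pow_add]; ring_nf
  rw [h3, ← mul_assoc] at key
  have := mul_right_cancel₀ hd0 key
  rw [this]; ring

lemma recursion (n : ℕ) :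
    (starAdj 3 (n + 1)).charpoly =
      (X - C 4) ^ (2 * 4 ^ n) *
        ((starAdj 3 n).charpoly.comp (X ^ 2 - C 4 * X - C 6)) := by
  have h := Matrix.charpoly_reindex (R := ℝ) (splitEquiv n).symm (starAdj 3 (n+1))
  rw [Matrix.reindex_apply, Equiv.symm_symm] at h
  rw [← h, submatrix_eq, charpoly_block]

lemma starAdj_zero : starAdj 3 0 = (6:ℝ) • 1 := by
  ext u v
  rw [starAdj_apply]
  by_cases h : u = v <;>
    simp [starWord, h, Matrix.smul_apply, Matrix.one_apply, eq_comm] <;> norm_num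

lemma charpoly_zero : (starAdj 3 0).charpoly = X - C 6 := by
  rw [starAdj_zero, Matrix.charpoly, charmatrix_smul_one, Matrix.det_smul, det_one, mul_one]
  rw [show Fintype.card (Fin 0 → Fin (3+1)) = 1 by simp [Fintype.card_fun], pow_one]

/-- For `p = 3`: `P_1(λ) = (λ − 6)(λ + 2)(λ − 4)²` and
`P_{n+1}(λ) = (λ − 4)^(2·4^n) · P_n(λ² − 4λ − 6)` for every `n ≥ 1`. -/
theorem stmt0 :
    (starAdj 3 1).charpoly = (X - C 6) * (X + C 2) * (X - C 4) ^ 2 ∧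
    ∀ n : ℕ, 1 ≤ n →
      (starAdj 3 (n + 1)).charpoly =
        (X - C 4) ^ (2 * 4 ^ n) *
          ((starAdj 3 n).charpoly.comp (X ^ 2 - C 4 * X - C 6)) := by
  constructor
  · have h := recursion 0
    rw [charpoly_zero] at h
    rw [h, sub_comp, X_comp, C_comp]
    norm_num
    simp only [map_ofNat]
    ring
  · intro n _
    exact recursion n
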